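/- arXiv:2302.05372 — 5 statements merged into one kernel-verified Lean document; each statement's English description precedes it below -/
import Mathlib

section
/- Fix p, q ∈ (1,∞) with 1/p + 1/q = 1, a finite set S, a nominal probability vector P₀ ∈ Δ_S, a radius β ≥ 0, and V ∈ ℝ^S. Define the uncertainty set P := { y ∈ ℝ^S : ∑_s y(s) = 0, P₀ + y ≥ 0, ‖y‖_p ≤ β }. Then min_{y ∈ P} ⟨P₀ + y, V⟩ = max_{μ ∈ ℝ^S, μ ≥ 0} ( ⟨P₀, V - μ⟩ - β·sp_q(V - μ) ), where sp_q(w) := min_{ω ∈ ℝ} ‖w - ω·1‖_q. -/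
/-- The `L_p` norm of a vector on a finite index set. -/
noncomputable def lpNorm {ι : Type*} [Fintype ι] (p : ℝ) (v : ι → ℝ) : ℝ :=
  (∑ i, |v i| ^ p) ^ (1 / p)

/-- The span seminorm `sp_q(v) := inf_{ω ∈ ℝ} ‖v - ω·1‖_q`. -/
noncomputable def spanSeminorm {ι : Type*} [Fintype ι] (q : ℝ) (v : ι → ℝ) : ℝ :=
  ⨅ ω : ℝ, lpNorm q (fun i => v i - ω)

open Finset

lemma lpNorm_nonneg {ι : Type*} [Fintype ι] (p : ℝ) (v : ι → ℝ) : 0 ≤ lpNorm p v :=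
  Real.rpow_nonneg (Finset.sum_nonneg fun i _ => Real.rpow_nonneg (abs_nonneg _) _) _

lemma lpNorm_eq_zero {ι : Type*} [Fintype ι] {p : ℝ} (hp : 0 < p) {v : ι → ℝ}
    (h : lpNorm p v ≤ 0) : v = 0 := by
  have hsum : ∑ i, |v i| ^ p = 0 := by
    by_contra hne
    have hpos : 0 < ∑ i, |v i| ^ p :=
      lt_of_le_of_ne (Finset.sum_nonneg fun i _ => Real.rpow_nonneg (abs_nonneg _) _)
        (Ne.symm hne)
    have := Real.rpow_pos_of_pos hpos (1 / p)
    unfold lpNorm at h; linarith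
  funext i
  have : ∀ j ∈ Finset.univ, (0:ℝ) ≤ |v j| ^ p := fun j _ => Real.rpow_nonneg (abs_nonneg _) _
  have hi := (Finset.sum_eq_zero_iff_of_nonneg this).mp hsum i (Finset.mem_univ i)
  have : |v i| = 0 := by
    by_contra habs
    have : 0 < |v i| := lt_of_le_of_ne (abs_nonneg _) (Ne.symm habs)
    have := Real.rpow_pos_of_pos this p
    linarith
  simpa [abs_eq_zero] using this

lemma bddBelow_span {ι : Type*} [Fintype ι] (q : ℝ) (v : ι → ℝ) :
    BddBelow (Set.range fun ω : ℝ => lpNorm q (fun i => v i - ω)) :=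
  ⟨0, by rintro x ⟨ω, rfl⟩; exact lpNorm_nonneg _ _⟩

lemma spanSeminorm_nonneg {ι : Type*} [Fintype ι] (q : ℝ) (v : ι → ℝ) :
    0 ≤ spanSeminorm q v :=
  le_ciInf fun ω => lpNorm_nonneg _ _

/-- `sgnPow q t = sign t * |t| ^ (q-1)`. -/
noncomputable def sgnPow (q t : ℝ) : ℝ := (max t 0) ^ (q - 1) - (max (-t) 0) ^ (q - 1)

lemma sgnPow_of_nonneg {q t : ℝ} (hq : 1 < q) (ht : 0 ≤ t) : sgnPow q t = t ^ (q - 1) := by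
  rcases eq_or_lt_of_le ht with h | h
  · simp [sgnPow, ← h, Real.zero_rpow (by linarith : q - 1 ≠ 0)]
  · rw [sgnPow, max_eq_left ht, max_eq_right (by linarith), Real.zero_rpow (by linarith : q - 1 ≠ 0),
      sub_zero]

lemma sgnPow_neg (q t : ℝ) : sgnPow q (-t) = - sgnPow q t := by
  simp [sgnPow]

lemma sgnPow_of_nonpos {q t : ℝ} (hq : 1 < q) (ht : t ≤ 0) : sgnPow q t = -((-t) ^ (q - 1)) := by
  have := sgnPow_of_nonneg hq (neg_nonneg.mpr ht)
  rw [sgnPow_neg] at this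
  linarith

lemma sgnPow_mul_self {q t : ℝ} (hq : 1 < q) : sgnPow q t * t = |t| ^ q := by
  rcases le_or_gt 0 t with ht | ht
  · rw [sgnPow_of_nonneg hq ht, abs_of_nonneg ht]
    rcases eq_or_lt_of_le ht with h | h
    · simp [← h, Real.zero_rpow (by linarith : q ≠ 0)]
    · rw [← Real.rpow_add_one h.ne' (q - 1), sub_add_cancel]
  · rw [sgnPow_of_nonpos hq ht.le, abs_of_neg ht]
    have h : (0:ℝ) < -t := by linarith
    have : (-t) ^ (q - 1) * (-t) = (-t) ^ q := by
      rw [← Real.rpow_add_one h.ne' (q - 1), sub_add_cancel]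
    nlinarith [this]

lemma abs_sgnPow {q t : ℝ} (hq : 1 < q) : |sgnPow q t| = |t| ^ (q - 1) := by
  rcases le_or_gt 0 t with ht | ht
  · rw [sgnPow_of_nonneg hq ht, abs_of_nonneg ht, abs_of_nonneg (Real.rpow_nonneg ht _)]
  · rw [sgnPow_of_nonpos hq ht.le, abs_of_neg ht, abs_neg,
      abs_of_nonneg (Real.rpow_nonneg (by linarith : (0:ℝ) ≤ -t) _)]

/-- Subgradient inequality for `|·|^q`. -/
lemma sgnPow_subgrad {q : ℝ} (hq : 1 < q) (a b : ℝ) :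
    |b| ^ q + q * sgnPow q b * (a - b) ≤ |a| ^ q := by
  -- reduce to b ≥ 0
  suffices h : ∀ a b : ℝ, 0 ≤ b → |b| ^ q + q * sgnPow q b * (a - b) ≤ |a| ^ q by
    rcases le_or_gt 0 b with hb | hb
    · exact h a b hb
    · have := h (-a) (-b) (by linarith)
      rw [sgnPow_neg, abs_neg, abs_neg] at this
      linarith [this]
  intro a b hb
  rw [sgnPow_of_nonneg hq hb, abs_of_nonneg hb]
  rcases eq_or_lt_of_le hb with h0 | h0
  · rw [← h0, Real.zero_rpow (by linarith : q ≠ 0), Real.zero_rpow (by linarith : q - 1 ≠ 0)]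
    simp [Real.rpow_nonneg (abs_nonneg a) q]
  · -- b > 0; first reduce a to |a|
    have key : ∀ c : ℝ, 0 ≤ c → b ^ q + q * b ^ (q-1) * (c - b) ≤ c ^ q := by
      intro c hc
      have hs : (-1:ℝ) ≤ c / b - 1 := by
        have : 0 ≤ c / b := div_nonneg hc h0.le
        linarith
      have := one_add_mul_self_le_rpow_one_add hs hq.le
      -- (1 + q*(c/b-1)) ≤ (c/b)^q
      have h1 : (1 : ℝ) + (c / b - 1) = c / b := by ring
      rw [h1] at this
      have hbq : (0:ℝ) < b ^ q := Real.rpow_pos_of_pos h0 q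
      have h2 : (c / b) ^ q = c ^ q / b ^ q := Real.div_rpow hc h0.le q
      rw [h2] at this
      have := mul_le_mul_of_nonneg_left this hbq.le
      rw [mul_div_cancel₀ _ (ne_of_gt hbq)] at this
      calc b ^ q + q * b ^ (q-1) * (c - b)
          = b ^ q * (1 + q * (c / b - 1)) := by
            have hb1 : b ^ (q-1) * b = b ^ q := by
              rw [← Real.rpow_add_one h0.ne' (q - 1), sub_add_cancel]
            field_simp
            linear_combination (q * (c - b)) * hb1
        _ ≤ c ^ q := this
    rcases le_or_gt 0 a with ha | ha
    · rw [abs_of_nonneg ha]; exact key a ha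
    · rw [abs_of_neg ha]
      have h1 := key (-a) (by linarith)
      have h2 : q * b ^ (q-1) * (a - b) ≤ q * b ^ (q-1) * (-a - b) := by
        have : (0:ℝ) ≤ q * b ^ (q-1) :=
          mul_nonneg (by linarith) (Real.rpow_nonneg h0.le _)
        nlinarith
      linarith

lemma continuous_sgnPow {q : ℝ} (hq : 1 < q) : Continuous (sgnPow q) := by
  unfold sgnPow
  apply Continuous.sub
  · exact ((continuous_id.max continuous_const)).rpow_const fun x => Or.inr (by linarith)
  · exact ((continuous_neg.max continuous_const)).rpow_const fun x => Or.inr (by linarith)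

section Omega

variable {S : Type*} [Fintype S] [Nonempty S]

lemma exists_omega {q : ℝ} (hq : 1 < q) (w : S → ℝ) :
    ∃ ω₀ : ℝ, ∑ s, sgnPow q (w s - ω₀) = 0 := by
  set a := Finset.univ.inf' Finset.univ_nonempty w with ha
  set b := Finset.univ.sup' Finset.univ_nonempty w with hb
  have hab : a ≤ b := le_trans (Finset.inf'_le _ (Finset.mem_univ (Classical.arbitrary S))) (Finset.le_sup' _ (Finset.mem_univ (Classical.arbitrary S)))
  have hF : Continuous fun ω : ℝ => ∑ s, sgnPow q (w s - ω) := by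
    apply continuous_finset_sum
    intro s _
    exact (continuous_sgnPow hq).comp (continuous_const.sub continuous_id)
  have hFa : 0 ≤ ∑ s, sgnPow q (w s - a) := by
    apply Finset.sum_nonneg
    intro s _
    have : a ≤ w s := Finset.inf'_le _ (Finset.mem_univ s)
    rw [sgnPow_of_nonneg hq (by linarith)]
    exact Real.rpow_nonneg (by linarith) _
  have hFb : ∑ s, sgnPow q (w s - b) ≤ 0 := by
    apply Finset.sum_nonpos
    intro s _
    have : w s ≤ b := Finset.le_sup' _ (Finset.mem_univ s)
    rw [sgnPow_of_nonpos hq (by linarith)]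
    simp only [neg_nonpos]
    exact Real.rpow_nonneg (by linarith) _
  have := intermediate_value_Icc' hab hF.continuousOn
    (Set.mem_Icc.mpr ⟨hFb, hFa⟩ : (0:ℝ) ∈ Set.Icc _ _)
  obtain ⟨ω₀, _, hω₀⟩ := this
  exact ⟨ω₀, hω₀⟩

lemma isMinOmega {q : ℝ} (hq : 1 < q) (w : S → ℝ) {ω₀ : ℝ}
    (h0 : ∑ s, sgnPow q (w s - ω₀) = 0) (ω : ℝ) :
    ∑ s, |w s - ω₀| ^ q ≤ ∑ s, |w s - ω| ^ q := by
  have key : ∀ s : S, |w s - ω₀| ^ q + q * sgnPow q (w s - ω₀) * (ω₀ - ω) ≤ |w s - ω| ^ q := by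
    intro s
    have := sgnPow_subgrad hq (w s - ω) (w s - ω₀)
    have he : (w s - ω) - (w s - ω₀) = ω₀ - ω := by ring
    rwa [he] at this
  calc ∑ s, |w s - ω₀| ^ q
      = ∑ s, (|w s - ω₀| ^ q + q * sgnPow q (w s - ω₀) * (ω₀ - ω)) := by
        rw [Finset.sum_add_distrib]
        have : ∑ s, q * sgnPow q (w s - ω₀) * (ω₀ - ω)
            = (q * (ω₀ - ω)) * ∑ s, sgnPow q (w s - ω₀) := by
          rw [Finset.mul_sum]; apply Finset.sum_congr rfl; intro s _; ring
        rw [this, h0, mul_zero, add_zero]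
    _ ≤ ∑ s, |w s - ω| ^ q := Finset.sum_le_sum fun s _ => key s

lemma span_eq {q : ℝ} (hq : 1 < q) (w : S → ℝ) {ω₀ : ℝ}
    (h0 : ∑ s, sgnPow q (w s - ω₀) = 0) :
    spanSeminorm q w = lpNorm q (fun s => w s - ω₀) := by
  apply le_antisymm
  · exact ciInf_le (bddBelow_span q w) ω₀
  · apply le_ciInf
    intro ω
    unfold lpNorm
    apply Real.rpow_le_rpow
      (Finset.sum_nonneg fun s _ => Real.rpow_nonneg (abs_nonneg _) _)
      (isMinOmega hq w h0 ω)
    positivity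

end Omega

section Extremal

variable {S : Type*} [Fintype S] [Nonempty S] {p q : ℝ}

lemma conj_fact (hp : 1 < p) (hq : 1 < q) (hpq : 1 / p + 1 / q = 1) : (q - 1) * p = q := by
  have hp0 : p ≠ 0 := by linarith
  have hq0 : q ≠ 0 := by linarith
  field_simp at hpq
  linarith

lemma lpNorm_zero_fun (hp : 1 < p) : lpNorm p (fun _ : S => (0:ℝ)) = 0 := by
  unfold lpNorm
  rw [Finset.sum_congr rfl fun s _ => by
    rw [abs_zero, Real.zero_rpow (by linarith : p ≠ 0)]]
  rw [Finset.sum_const, smul_zero, Real.zero_rpow (by positivity)]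

/-- construction of the extremal `y` attaining `-β * sp_q(w)`. -/
lemma extremal (hp : 1 < p) (hq : 1 < q) (hpq : 1 / p + 1 / q = 1)
    {β : ℝ} (hβ : 0 ≤ β) (w : S → ℝ) :
    ∃ y : S → ℝ, (∑ s, y s = 0) ∧ lpNorm p y ≤ β ∧
      ∑ s, y s * w s = -(β * spanSeminorm q w) := by
  obtain ⟨ω₀, h0⟩ := exists_omega hq w
  set z : S → ℝ := fun s => w s - ω₀ with hz
  have hspan : spanSeminorm q w = lpNorm q z := span_eq hq w h0
  set G : ℝ := ∑ s, |z s| ^ q with hG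
  have hGnn : 0 ≤ G := Finset.sum_nonneg fun s _ => Real.rpow_nonneg (abs_nonneg _) _
  have hq0 : q ≠ 0 := by linarith
  have hp0 : p ≠ 0 := by linarith
  have hlpz : lpNorm q z = G ^ (1/q) := rfl
  rcases eq_or_lt_of_le hGnn with hG0 | hGpos
  · -- G = 0 : w is constant, span = 0
    refine ⟨fun _ => 0, by simp, ?_, ?_⟩
    · rw [lpNorm_zero_fun hp]; exact hβ
    · rw [hspan, hlpz, ← hG0, Real.zero_rpow (by positivity)]
      simp
  · -- G > 0
    have hGp : (0:ℝ) < G ^ (1/p) := Real.rpow_pos_of_pos hGpos _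
    set c : ℝ := β / G ^ (1/p) with hc
    have hcnn : 0 ≤ c := div_nonneg hβ hGp.le
    set y : S → ℝ := fun s => -(c * sgnPow q (z s)) with hy
    have hsum : ∑ s, y s = 0 := by
      have : ∑ s, y s = -(c * ∑ s, sgnPow q (z s)) := by
        rw [Finset.mul_sum, ← Finset.sum_neg_distrib]
      rw [this, h0, mul_zero, neg_zero]
    refine ⟨y, hsum, ?_, ?_⟩
    · -- lpNorm p y = c * G^(1/p) = β
      have habs : ∀ s : S, |y s| ^ p = c ^ p * |z s| ^ q := by
        intro s
        rw [hy]
        simp only []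
        rw [abs_neg, abs_mul, abs_of_nonneg hcnn, abs_sgnPow hq,
          Real.mul_rpow hcnn (Real.rpow_nonneg (abs_nonneg _) _),
          ← Real.rpow_mul (abs_nonneg _), conj_fact hp hq hpq]
      have hsump : ∑ s, |y s| ^ p = c ^ p * G := by
        rw [Finset.sum_congr rfl fun s _ => habs s, ← Finset.mul_sum]
      have : lpNorm p y = c * G ^ (1/p) := by
        unfold lpNorm
        rw [hsump, Real.mul_rpow (Real.rpow_nonneg hcnn _) hGnn,
          ← Real.rpow_mul hcnn, mul_one_div_cancel hp0, Real.rpow_one]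
      rw [this, hc, div_mul_cancel₀ _ hGp.ne']
    · -- value
      have hyz : ∑ s, y s * z s = -(c * G) := by
        have : ∀ s : S, y s * z s = -(c * (|z s| ^ q)) := by
          intro s
          rw [hy]
          simp only []
          rw [← sgnPow_mul_self (t := z s) hq]
          ring
        rw [Finset.sum_congr rfl fun s _ => this s, Finset.sum_neg_distrib, ← Finset.mul_sum]
      have hsplit : ∑ s, y s * w s = ∑ s, y s * z s + ω₀ * ∑ s, y s := by
        rw [Finset.mul_sum, ← Finset.sum_add_distrib]
        apply Finset.sum_congr rfl
        intro s _
        rw [hz]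
        simp only []
        ring
      rw [hsplit, hsum, mul_zero, add_zero, hyz, hspan, hlpz]
      have : c * G = β * G ^ (1/q) := by
        have hGsplit : G ^ (1/p) * G ^ (1/q) = G := by
          rw [← Real.rpow_add hGpos, hpq, Real.rpow_one]
        calc c * G = β / G ^ (1/p) * (G ^ (1/p) * G ^ (1/q)) := by rw [hGsplit]
          _ = β * G ^ (1/q) := by
              rw [← mul_assoc, div_mul_cancel₀ _ hGp.ne']
      rw [this]

end Extremal

section Holder

variable {S : Type*} [Fintype S] [Nonempty S] {p q : ℝ}

lemma holder_side (hp : 1 < p) (hq : 1 < q) (hpq : 1 / p + 1 / q = 1)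
    {β : ℝ} (hβ : 0 ≤ β) (y w : S → ℝ) (hy : ∑ s, y s = 0) (hn : lpNorm p y ≤ β) :
    -(β * spanSeminorm q w) ≤ ∑ s, y s * w s := by
  rcases eq_or_lt_of_le hβ with hβ0 | hβpos
  · have : y = 0 := lpNorm_eq_zero (by linarith : (0:ℝ) < p) (by rw [← hβ0] at hn; exact hn)
    subst this
    simp [← hβ0]
  · have key : ∀ ω : ℝ, -(∑ s, y s * w s) / β ≤ lpNorm q fun s => w s - ω := by
      intro ω
      have hpq' : Real.HolderConjugate p q :=
        Real.holderConjugate_iff.mpr ⟨hp, by rw [← one_div, ← one_div]; exact hpq⟩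
      have hold := Real.inner_le_Lp_mul_Lq (Finset.univ (α := S))
        (fun s => -(y s)) (fun s => w s - ω) hpq'
      have h1 : ∑ s, -(y s) * (w s - ω) = -(∑ s, y s * w s) := by
        have he : ∀ s : S, -(y s) * (w s - ω) = -(y s * w s) + ω * y s := fun s => by ring
        rw [Finset.sum_congr rfl fun s _ => he s, Finset.sum_add_distrib,
          Finset.sum_neg_distrib, ← Finset.mul_sum, hy, mul_zero, add_zero]
      have h2 : (∑ s, |(-(y s))| ^ p) ^ (1/p) = lpNorm p y := by
        unfold lpNorm
        congr 1
        exact Finset.sum_congr rfl fun s _ => by rw [abs_neg]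
      rw [h1, h2] at hold
      have h3 : -(∑ s, y s * w s) ≤ β * lpNorm q fun s => w s - ω := by
        refine le_trans hold ?_
        exact mul_le_mul_of_nonneg_right hn (lpNorm_nonneg _ _)
      rw [div_le_iff₀ hβpos]
      linarith [h3]
    have hfinal : -(∑ s, y s * w s) / β ≤ spanSeminorm q w := le_ciInf key
    rw [div_le_iff₀ hβpos] at hfinal
    linarith

end Holder

section Helpers

lemma eps_le {c d K : ℝ} (h : ∀ ε > (0:ℝ), c + ε * d < K) : c ≤ K := by
  rcases le_or_gt 0 d with hd | hd
  · have := h 1 one_pos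
    nlinarith
  · by_contra hc
    push_neg at hc
    have hε : (0:ℝ) < (c - K) / (-d) := div_pos (by linarith) (by linarith)
    have h2 := h _ hε
    have h3 : (c - K) / (-d) * d = -(c - K) := by
      rw [div_mul_eq_mul_div, div_eq_iff (by linarith : (-d) ≠ 0)]
      ring
    rw [h3] at h2
    linarith

lemma coef_nonpos {c d K : ℝ} (h : ∀ T > (0:ℝ), c + T * d < K) : d ≤ 0 := by
  by_contra hd
  push_neg at hd
  set T : ℝ := max 1 ((K - c) / d) with hT
  have hT0 : 0 < T := lt_of_lt_of_le one_pos (le_max_left _ _)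
  have h1 : (K - c) / d ≤ T := le_max_right _ _
  have h2 : K - c ≤ T * d := by
    rw [div_le_iff₀ hd] at h1
    linarith
  have := h T hT0
  linarith

lemma cvx_strict {a b u₁ u₂ v₁ v₂ : ℝ} (ha : 0 ≤ a) (hb : 0 ≤ b) (hab : a + b = 1)
    (h₁ : u₁ < v₁) (h₂ : u₂ < v₂) : a * u₁ + b * u₂ < a * v₁ + b * v₂ := by
  rcases eq_or_lt_of_le ha with h | h
  · have hb1 : b = 1 := by linarith
    simp [← h, hb1, h₂]
  · have := mul_lt_mul_of_pos_left h₁ h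
    have := mul_le_mul_of_nonneg_left h₂.le hb
    linarith

lemma lpNorm_smul {ι : Type*} [Fintype ι] {p : ℝ} (hp : 1 < p) {a : ℝ} (ha : 0 ≤ a)
    (y : ι → ℝ) : lpNorm p (fun i => a * y i) = a * lpNorm p y := by
  unfold lpNorm
  have : ∀ i : ι, |a * y i| ^ p = a ^ p * |y i| ^ p := by
    intro i
    rw [abs_mul, abs_of_nonneg ha, Real.mul_rpow ha (abs_nonneg _)]
  rw [Finset.sum_congr rfl fun i _ => this i, ← Finset.mul_sum,
    Real.mul_rpow (Real.rpow_nonneg ha _)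
      (Finset.sum_nonneg fun i _ => Real.rpow_nonneg (abs_nonneg _) _),
    ← Real.rpow_mul ha, mul_one_div_cancel (by linarith : p ≠ 0), Real.rpow_one]

end Helpers

section Repr

variable {S : Type*} [Fintype S]

lemma clm_repr [DecidableEq S] (f : ((S → ℝ) × ℝ) →L[ℝ] ℝ) (x : (S → ℝ) × ℝ) :
    f x = ∑ s, x.1 s * f (Pi.single s 1, 0) + x.2 * f ((0 : S → ℝ), (1:ℝ)) := by

  have hx : x = (∑ s, x.1 s • ((Pi.single s 1 : S → ℝ), (0:ℝ)))
      + x.2 • ((0 : S → ℝ), (1:ℝ)) := by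
    apply Prod.ext
    · rw [Prod.fst_add, Prod.fst_sum]
      funext t
      simp [Pi.single_apply, Finset.sum_ite_eq']
    · rw [Prod.snd_add, Prod.snd_sum]
      simp
  conv_lhs => rw [hx]
  rw [map_add, map_sum, map_smul]
  simp only [smul_eq_mul]
  congr 1
  apply Finset.sum_congr rfl
  intro s _
  rw [map_smul, smul_eq_mul]

end Repr

section Separation

variable {S : Type*} [Fintype S] [Nonempty S] {p : ℝ}

lemma separation (hp : 1 < p) (P₀ V : S → ℝ) (hP₀pos : ∀ s, 0 ≤ P₀ s)
    (hP₀sum : ∑ s, P₀ s = 1) {β : ℝ} (hβpos : 0 < β) (v : ℝ)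
    (hv : ∀ y : S → ℝ, (∑ s, y s = 0) → (∀ s, 0 ≤ P₀ s + y s) → lpNorm p y ≤ β →
      v ≤ ∑ s, (P₀ s + y s) * V s) :
    ∃ μ : S → ℝ, (∀ s, 0 ≤ μ s) ∧ ∀ y : S → ℝ, (∑ s, y s = 0) → lpNorm p y ≤ β →
      v ≤ ∑ s, (P₀ s + y s) * (V s - μ s) := by
  classical
  set C : Set ((S → ℝ) × ℝ) := {x | ∃ y : S → ℝ, (∑ s, y s = 0) ∧ lpNorm p y ≤ β ∧
      (∀ s, -(P₀ s + y s) < x.1 s) ∧ (∑ s, (P₀ s + y s) * V s) < x.2} with hCdef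
  have hCopen : IsOpen C := by
    have : C = ⋃ y : S → ℝ, ⋃ (_ : (∑ s, y s = 0) ∧ lpNorm p y ≤ β),
        ({x : (S → ℝ) × ℝ | ∀ s, -(P₀ s + y s) < x.1 s} ∩
          {x : (S → ℝ) × ℝ | (∑ s, (P₀ s + y s) * V s) < x.2}) := by
      ext x
      simp only [hCdef, Set.mem_setOf_eq, Set.mem_iUnion, Set.mem_inter_iff]
      tauto
    rw [this]
    refine isOpen_iUnion fun y => isOpen_iUnion fun _ => IsOpen.inter ?_ ?_
    · rw [Set.setOf_forall]
      exact isOpen_iInter_of_finite fun s =>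
        isOpen_lt continuous_const ((continuous_apply s).comp continuous_fst)
    · exact isOpen_lt continuous_const continuous_snd
  have hCconv : Convex ℝ C := by
    rintro x₁ ⟨y₁, hs₁, hn₁, hc₁, hv₁⟩ x₂ ⟨y₂, hs₂, hn₂, hc₂, hv₂⟩ a b ha hb hab
    refine ⟨fun s => a * y₁ s + b * y₂ s, ?_, ?_, ?_, ?_⟩
    · rw [Finset.sum_add_distrib, ← Finset.mul_sum, ← Finset.mul_sum, hs₁, hs₂]; ring
    · calc lpNorm p (fun s => a * y₁ s + b * y₂ s)
          ≤ lpNorm p (fun s => a * y₁ s) + lpNorm p (fun s => b * y₂ s) := by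
            unfold lpNorm
            exact Real.Lp_add_le Finset.univ _ _ hp.le
        _ = a * lpNorm p y₁ + b * lpNorm p y₂ := by
            rw [lpNorm_smul hp ha, lpNorm_smul hp hb]
        _ ≤ β := by nlinarith [lpNorm_nonneg p y₁, lpNorm_nonneg p y₂]
    · intro s
      have hx : (a • x₁ + b • x₂).1 s = a * x₁.1 s + b * x₂.1 s := rfl
      rw [hx]
      have he : -(P₀ s + (a * y₁ s + b * y₂ s))
          = a * (-(P₀ s + y₁ s)) + b * (-(P₀ s + y₂ s)) := by
        linear_combination (P₀ s) * hab
      rw [he]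
      exact cvx_strict ha hb hab (hc₁ s) (hc₂ s)
    · have hx2 : (a • x₁ + b • x₂).2 = a * x₁.2 + b * x₂.2 := rfl
      have he : ∑ s, (P₀ s + (a * y₁ s + b * y₂ s)) * V s
          = a * (∑ s, (P₀ s + y₁ s) * V s) + b * (∑ s, (P₀ s + y₂ s) * V s) := by
        rw [Finset.mul_sum, Finset.mul_sum, ← Finset.sum_add_distrib]
        refine Finset.sum_congr rfl fun s _ => ?_
        linear_combination (-(P₀ s * V s)) * hab
      rw [hx2, he]
      exact cvx_strict ha hb hab hv₁ hv₂
  have hx₀ : ((fun _ => 0 : S → ℝ), v) ∉ C := by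
    rintro ⟨y, hs, hn, hcoord, hval⟩
    have hpos : ∀ s, 0 ≤ P₀ s + y s := fun s => by have := hcoord s; simp at this; linarith
    exact absurd hval (not_lt.mpr (hv y hs hpos hn))
  obtain ⟨f, hf⟩ := geometric_hahn_banach_open_point hCconv hCopen hx₀
  set m : S → ℝ := fun s => f (Pi.single s 1, 0) with hm
  set lam : ℝ := f ((0 : S → ℝ), (1:ℝ)) with hlam
  have hrepr : ∀ x : (S → ℝ) × ℝ, f x = ∑ s, x.1 s * m s + x.2 * lam := clm_repr f
  have hx₀val : f ((fun _ => 0 : S → ℝ), v) = v * lam := by rw [hrepr]; simp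
  -- core consequence of separation
  have hcore : ∀ y : S → ℝ, (∑ s, y s = 0) → lpNorm p y ≤ β →
      (∑ s, -(P₀ s + y s) * m s) + (∑ s, (P₀ s + y s) * V s) * lam ≤ v * lam := by
    intro y hs hn
    apply eps_le (d := (∑ s, m s) + lam)
    intro ε hε
    have hmem : ((fun s => -(P₀ s + y s) + ε, (∑ s, (P₀ s + y s) * V s) + ε) : (S→ℝ)×ℝ) ∈ C :=
      ⟨y, hs, hn, fun s => by show -(P₀ s + y s) < -(P₀ s + y s) + ε; linarith,
        by show (∑ s, (P₀ s + y s) * V s) < (∑ s, (P₀ s + y s) * V s) + ε; linarith⟩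
    have hlt := hf _ hmem
    rw [hrepr, hx₀val] at hlt
    simp only [] at hlt
    have hexp : ∑ s, (-(P₀ s + y s) + ε) * m s
        = ∑ s, -(P₀ s + y s) * m s + ε * ∑ s, m s := by
      rw [Finset.mul_sum, ← Finset.sum_add_distrib]
      exact Finset.sum_congr rfl fun s _ => by ring
    rw [hexp] at hlt
    nlinarith [hlt]
  -- the witness box with y = 0
  have hbox : ∀ (g : S → ℝ) (t : ℝ), (∀ s, 0 ≤ g s) → (0 ≤ t) →
      ((fun s => -(P₀ s) + 1 + g s, (∑ s, P₀ s * V s) + 1 + t) : (S→ℝ)×ℝ) ∈ C := by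
    intro g t hg ht
    refine ⟨fun _ => 0, by simp, by rw [lpNorm_zero_fun hp]; exact hβpos.le, ?_, ?_⟩
    · intro s
      simp only []
      have := hg s
      linarith
    · simp only [add_zero]
      linarith
  -- m ≤ 0
  have hmnp : ∀ s₀ : S, m s₀ ≤ 0 := by
    intro s₀
    apply coef_nonpos (c := ∑ s, (-(P₀ s) + 1) * m s + ((∑ s, P₀ s * V s) + 1) * lam)
      (K := v * lam)
    intro T hT
    have hmem := hbox (fun s => if s = s₀ then T else 0) 0
      (fun s => by split <;> [exact hT.le; rfl]) le_rfl
    have hlt := hf _ hmem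
    rw [hrepr, hx₀val] at hlt
    simp only [add_zero] at hlt
    have hexp : ∑ s, (-(P₀ s) + 1 + (if s = s₀ then T else 0)) * m s
        = ∑ s, (-(P₀ s) + 1) * m s + T * m s₀ := by
      have h1 : ∀ s : S, (-(P₀ s) + 1 + (if s = s₀ then T else 0)) * m s
          = (-(P₀ s) + 1) * m s + (if s = s₀ then T * m s else 0) := by
        intro s; split <;> ring
      rw [Finset.sum_congr rfl fun s _ => h1 s, Finset.sum_add_distrib,
        Finset.sum_ite_eq' Finset.univ s₀ (fun s => T * m s)]
      simp
    rw [hexp] at hlt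
    linarith
  -- lam ≤ 0
  have hlamnp : lam ≤ 0 := by
    apply coef_nonpos (c := ∑ s, (-(P₀ s) + 1) * m s + ((∑ s, P₀ s * V s) + 1) * lam)
      (K := v * lam)
    intro T hT
    have hmem := hbox (fun _ => 0) T (fun _ => le_rfl) hT.le
    have hlt := hf _ hmem
    rw [hrepr, hx₀val] at hlt
    simp only [add_zero] at hlt
    linarith
  -- Slater point
  set n : ℝ := (Fintype.card S : ℝ) with hn
  have hnpos : 0 < n := by
    rw [hn]
    exact_mod_cast Fintype.card_pos
  set u : S → ℝ := fun s => 1/n - P₀ s with hu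
  set L : ℝ := lpNorm p u with hL
  have hLnn : 0 ≤ L := lpNorm_nonneg _ _
  set ε₀ : ℝ := min 1 (β / (L + 1)) with hε₀
  have hε₀pos : 0 < ε₀ := lt_min one_pos (div_pos hβpos (by linarith))
  have hε₀le1 : ε₀ ≤ 1 := min_le_left _ _
  set yh : S → ℝ := fun s => ε₀ * u s with hyh
  have hyhsum : ∑ s, yh s = 0 := by
    rw [hyh]
    simp only []
    rw [← Finset.mul_sum]
    have : ∑ s : S, u s = 0 := by
      rw [hu]
      simp only []
      rw [Finset.sum_sub_distrib, hP₀sum, Finset.sum_const, Finset.card_univ]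
      rw [hn]
      have : (Fintype.card S : ℝ) ≠ 0 := by positivity
      field_simp
      simp [nsmul_eq_mul, this]
    rw [this, mul_zero]
  have hyhnorm : lpNorm p yh ≤ β := by
    rw [hyh]
    rw [lpNorm_smul hp hε₀pos.le]
    have h1 : ε₀ ≤ β / (L + 1) := min_le_right _ _
    have h2 : ε₀ * L ≤ β / (L + 1) * L := mul_le_mul_of_nonneg_right h1 hLnn
    have h3 : β / (L + 1) * L ≤ β := by
      rw [div_mul_eq_mul_div, div_le_iff₀ (by linarith : (0:ℝ) < L + 1)]
      nlinarith
    rw [← hL]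
    linarith
  have hyhpos : ∀ s, 0 < P₀ s + yh s := by
    intro s
    rw [hyh, hu]
    simp only []
    have h1 : P₀ s + ε₀ * (1/n - P₀ s) = (1 - ε₀) * P₀ s + ε₀ / n := by ring
    rw [h1]
    have := hP₀pos s
    have h2 : 0 ≤ (1 - ε₀) * P₀ s := mul_nonneg (by linarith) this
    have h3 : 0 < ε₀ / n := div_pos hε₀pos hnpos
    linarith
  -- lam < 0
  have hlamneg : lam < 0 := by
    rcases eq_or_lt_of_le hlamnp with h0 | h; swap
    · exact h
    exfalso
    have hc := hcore yh hyhsum hyhnorm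
    rw [h0] at hc
    simp only [mul_zero, add_zero] at hc
    have hterm : ∀ s : S, 0 ≤ (P₀ s + yh s) * (-(m s)) :=
      fun s => mul_nonneg (hyhpos s).le (by linarith [hmnp s])
    have hsum0 : ∑ s, (P₀ s + yh s) * (-(m s)) = 0 := by
      apply le_antisymm
      · have heq : ∑ s, (P₀ s + yh s) * (-(m s)) = ∑ s, -(P₀ s + yh s) * m s :=
          Finset.sum_congr rfl fun s _ => by ring
        rw [heq]
        exact hc
      · exact Finset.sum_nonneg fun s _ => hterm s
    have hms : ∀ s : S, m s = 0 := by
      intro s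
      have := (Finset.sum_eq_zero_iff_of_nonneg fun s _ => hterm s).mp hsum0 s (Finset.mem_univ s)
      rcases mul_eq_zero.mp this with h | h
      · exact absurd h (ne_of_gt (hyhpos s))
      · linarith
    have hmem := hbox (fun _ => 0) 0 (fun _ => le_rfl) le_rfl
    have hlt := hf _ hmem
    rw [hrepr, hx₀val, h0] at hlt
    simp only [mul_zero, add_zero] at hlt
    rw [Finset.sum_congr rfl fun s _ => by rw [hms s, mul_zero]] at hlt
    simp at hlt
  -- conclusion
  refine ⟨fun s => m s / lam, ?_, ?_⟩
  · intro s
    show 0 ≤ m s / lam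
    rw [← neg_div_neg_eq]
    exact div_nonneg (by linarith [hmnp s]) (by linarith)
  · intro y hs hn
    show v ≤ ∑ s, (P₀ s + y s) * (V s - m s / lam)
    have hc := hcore y hs hn
    have hA : ∑ s, (P₀ s + y s) * (V s - m s / lam)
        = (∑ s, -(P₀ s + y s) * m s) / lam + ∑ s, (P₀ s + y s) * V s := by
      rw [Finset.sum_div, ← Finset.sum_add_distrib]
      refine Finset.sum_congr rfl fun s _ => ?_
      field_simp
      ring
    rw [hA]
    set A := ∑ s, -(P₀ s + y s) * m s with hAdef
    set B := ∑ s, (P₀ s + y s) * V s with hBdef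
    rw [← sub_le_iff_le_add]
    rw [le_div_iff_of_neg hlamneg]
    nlinarith [hc]

end Separation

section Attain

variable {S : Type*} [Fintype S] [Nonempty S] {p : ℝ}

lemma lpNorm_continuous (hp : 1 < p) : Continuous fun y : S → ℝ => lpNorm p y := by
  unfold lpNorm
  exact (continuous_finset_sum _ fun s _ =>
      ((continuous_apply s).abs.rpow_const fun x => Or.inr (by linarith))).rpow_const
    fun x => Or.inr (by positivity)

lemma primal_attained (hp : 1 < p) (P₀ V : S → ℝ) (hP₀pos : ∀ s, 0 ≤ P₀ s)
    (hP₀sum : ∑ s, P₀ s = 1) {β : ℝ} (hβ : 0 ≤ β) :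
    ∃ y₀ : S → ℝ, ((∑ s, y₀ s = 0) ∧ (∀ s, 0 ≤ P₀ s + y₀ s) ∧ lpNorm p y₀ ≤ β) ∧
      ∀ y : S → ℝ, (∑ s, y s = 0) → (∀ s, 0 ≤ P₀ s + y s) → lpNorm p y ≤ β →
        ∑ s, (P₀ s + y₀ s) * V s ≤ ∑ s, (P₀ s + y s) * V s := by
  set K : Set (S → ℝ) := {y | (∑ s, y s = 0) ∧ (∀ s, 0 ≤ P₀ s + y s) ∧ lpNorm p y ≤ β}
    with hK
  have hKsub : K ⊆ Set.pi Set.univ fun _ => Set.Icc (-1 : ℝ) 1 := by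
    rintro y ⟨hs, hpos, _⟩ s _
    have hsum1 : ∑ t, (P₀ t + y t) = 1 := by
      rw [Finset.sum_add_distrib, hP₀sum, hs, add_zero]
    have hub : P₀ s + y s ≤ 1 := by
      rw [← hsum1]
      exact Finset.single_le_sum (fun t _ => hpos t) (Finset.mem_univ s)
    have hP₀ub : P₀ s ≤ 1 := by
      rw [← hP₀sum]
      exact Finset.single_le_sum (fun t _ => hP₀pos t) (Finset.mem_univ s)
    have := hpos s
    have := hP₀pos s
    rw [Set.mem_Icc]
    constructor <;> linarith
  have hKclosed : IsClosed K := by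
    have h1 : IsClosed {y : S → ℝ | ∑ s, y s = 0} :=
      isClosed_eq (continuous_finset_sum _ fun s _ => continuous_apply s) continuous_const
    have h2 : IsClosed {y : S → ℝ | ∀ s, 0 ≤ P₀ s + y s} := by
      rw [Set.setOf_forall]
      exact isClosed_iInter fun s =>
        isClosed_le continuous_const (continuous_const.add (continuous_apply s))
    have h3 : IsClosed {y : S → ℝ | lpNorm p y ≤ β} :=
      isClosed_le (lpNorm_continuous hp) continuous_const
    have : K = {y : S → ℝ | ∑ s, y s = 0} ∩
        ({y : S → ℝ | ∀ s, 0 ≤ P₀ s + y s} ∩ {y : S → ℝ | lpNorm p y ≤ β}) := by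
      exact Set.ext fun y => ⟨fun ⟨a, b, c⟩ => ⟨a, b, c⟩, fun ⟨a, b, c⟩ => ⟨a, b, c⟩⟩
    rw [this]
    exact h1.inter (h2.inter h3)
  have hKcompact : IsCompact K :=
    IsCompact.of_isClosed_subset (isCompact_univ_pi fun _ => isCompact_Icc) hKclosed hKsub
  have hKne : K.Nonempty := by
    refine ⟨fun _ => 0, by simp, fun s => by simpa using hP₀pos s, ?_⟩
    rw [lpNorm_zero_fun hp]
    exact hβ
  have hFcont : Continuous fun y : S → ℝ => ∑ s, (P₀ s + y s) * V s :=
    continuous_finset_sum _ fun s _ =>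
      (continuous_const.add (continuous_apply s)).mul continuous_const
  obtain ⟨y₀, hy₀K, hy₀min⟩ := hKcompact.exists_isMinOn hKne hFcont.continuousOn
  exact ⟨y₀, hy₀K, fun y h1 h2 h3 => hy₀min (show y ∈ K from ⟨h1, h2, h3⟩)⟩

end Attain


/-- duality for the inner minimization over the `sa`-rectangular `L_p`
uncertainty set constrained to the simplex:
`min_{y ∈ P} ⟨P₀ + y, V⟩ = max_{μ ≥ 0} (⟨P₀, V - μ⟩ - β·sp_q(V - μ))`. -/
theorem sa_rectangular_duality {S : Type*} [Fintype S] [Nonempty S]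
    (p q : ℝ) (hp : 1 < p) (hq : 1 < q) (hpq : 1 / p + 1 / q = 1)
    (P₀ : S → ℝ) (hP₀pos : ∀ s, 0 ≤ P₀ s) (hP₀sum : ∑ s, P₀ s = 1)
    (β : ℝ) (hβ : 0 ≤ β) (V : S → ℝ) :
    sInf {x : ℝ | ∃ y : S → ℝ, (∑ s, y s = 0) ∧ (∀ s, 0 ≤ P₀ s + y s) ∧
        lpNorm p y ≤ β ∧ x = ∑ s, (P₀ s + y s) * V s}
      = sSup {x : ℝ | ∃ μ : S → ℝ, (∀ s, 0 ≤ μ s) ∧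
        x = (∑ s, P₀ s * (V s - μ s)) - β * spanSeminorm q (fun s => V s - μ s)} := by
  classical
  set A : Set ℝ := {x : ℝ | ∃ y : S → ℝ, (∑ s, y s = 0) ∧ (∀ s, 0 ≤ P₀ s + y s) ∧
      lpNorm p y ≤ β ∧ x = ∑ s, (P₀ s + y s) * V s} with hA
  set B : Set ℝ := {x : ℝ | ∃ μ : S → ℝ, (∀ s, 0 ≤ μ s) ∧
      x = (∑ s, P₀ s * (V s - μ s)) - β * spanSeminorm q (fun s => V s - μ s)} with hB
  -- membership of the trivial points
  have hA0 : (∑ s, (P₀ s + 0) * V s) ∈ A := by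
    refine ⟨fun _ => 0, by simp, fun s => by simpa using hP₀pos s, ?_, rfl⟩
    rw [lpNorm_zero_fun hp]; exact hβ
  have hB0 : ((∑ s, P₀ s * (V s - (fun _ => (0:ℝ)) s)) -
      β * spanSeminorm q (fun s => V s - (fun _ => (0:ℝ)) s)) ∈ B :=
    ⟨fun _ => 0, fun s => le_rfl, rfl⟩
  -- weak duality
  have weak : ∀ a ∈ A, ∀ b ∈ B, b ≤ a := by
    rintro a ⟨y, hs, hpos, hn, rfl⟩ b ⟨μ, hμ, rfl⟩
    have hhold := holder_side hp hq hpq hβ y (fun s => V s - μ s) hs hn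
    have heq : ∑ s, P₀ s * (V s - μ s) + ∑ s, y s * (V s - μ s)
        = ∑ s, (P₀ s + y s) * (V s - μ s) := by
      rw [← Finset.sum_add_distrib]
      exact Finset.sum_congr rfl fun s _ => by ring
    have hle : ∑ s, (P₀ s + y s) * (V s - μ s) ≤ ∑ s, (P₀ s + y s) * V s :=
      Finset.sum_le_sum fun s _ => by nlinarith [hpos s, hμ s]
    linarith
  have hAne : A.Nonempty := ⟨_, hA0⟩
  have hBne : B.Nonempty := ⟨_, hB0⟩
  have hAbdd : BddBelow A := ⟨_, fun a ha => weak a ha _ hB0⟩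
  have hBbdd : BddAbove B := ⟨_, fun b hb => weak _ hA0 b hb⟩
  apply le_antisymm
  · -- strong duality direction
    rcases eq_or_lt_of_le hβ with hβ0 | hβpos
    · -- β = 0
      have h1 : sInf A ≤ ∑ s, (P₀ s + 0) * V s := csInf_le hAbdd hA0
      have h2 : ((∑ s, P₀ s * (V s - (fun _ => (0:ℝ)) s)) -
          β * spanSeminorm q (fun s => V s - (fun _ => (0:ℝ)) s)) ≤ sSup B :=
        le_csSup hBbdd hB0
      have h3 : ∑ s, (P₀ s + 0) * V s = ∑ s, P₀ s * (V s - (fun _ => (0:ℝ)) s) := by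
        exact Finset.sum_congr rfl fun s _ => by ring
      rw [← hβ0] at h2
      rw [h3] at h1
      linarith
    · obtain ⟨y₀, ⟨hy1, hy2, hy3⟩, hmin⟩ := primal_attained hp P₀ V hP₀pos hP₀sum hβ
      set v : ℝ := ∑ s, (P₀ s + y₀ s) * V s with hv
      obtain ⟨μ, hμ, hstrong⟩ := separation hp P₀ V hP₀pos hP₀sum hβpos v hmin
      obtain ⟨ys, hyss, hysn, hysval⟩ := extremal hp hq hpq hβ (fun s => V s - μ s)
      have hbval : v ≤ (∑ s, P₀ s * (V s - μ s)) -
          β * spanSeminorm q (fun s => V s - μ s) := by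
        have h1 := hstrong ys hyss hysn
        have h2 : ∑ s, (P₀ s + ys s) * (V s - μ s)
            = ∑ s, P₀ s * (V s - μ s) + ∑ s, ys s * (V s - μ s) := by
          rw [← Finset.sum_add_distrib]
          exact Finset.sum_congr rfl fun s _ => by ring
        rw [h2, hysval] at h1
        linarith
      have hvA : v ∈ A := ⟨y₀, hy1, hy2, hy3, rfl⟩
      have hbB : ((∑ s, P₀ s * (V s - μ s)) -
          β * spanSeminorm q (fun s => V s - μ s)) ∈ B := ⟨μ, hμ, rfl⟩
      have h4 : sInf A ≤ v := csInf_le hAbdd hvA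
      have h5 := le_csSup hBbdd hbB
      linarith
  · exact csSup_le hBne fun b hb => le_csInf hAne fun a ha => weak a ha b hb
end

section
/- Let M be a discounted MDP with finite state space S, finite action space A, transition kernel P, rewards in [0,1], and discount γ ∈ [0,1). Let M̂ be identical except with transition kernel P̂. Let Q* and Q̂* be the optimal Q-functions of M and M̂, and V*, V̂* the optimal value functions. If for every state-action pair (s,a), |⟨P(·|s,a) − P̂(·|s,a), V*⟩| ≤ ε, then ‖Q* − Q̂*‖_∞ ≤ γ ε / (1 − γ). -/
/-- sup-difference bound for finite suprema. -/
lemma sup_sub_sup_le {A : Type*} [Fintype A] [Nonempty A] (f g : A → ℝ) (D : ℝ)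
    (h : ∀ a, f a - g a ≤ D) : (⨆ a, f a) - (⨆ a, g a) ≤ D := by
  have : (⨆ a, f a) ≤ (⨆ a, g a) + D := by
    apply ciSup_le
    intro a
    have h2 : f a ≤ g a + D := by linarith [h a]
    exact h2.trans (by
      gcongr
      exact le_ciSup (Set.Finite.bddAbove (Set.finite_range _)) a)
  linarith

/-- if the optimal value function `V*` of an MDP satisfies
`|⟨P(·|s,a) − P̂(·|s,a), V*⟩| ≤ ε` for all `(s,a)`, then the optimal Q-functions of the
two MDPs (same rewards in `[0,1]`, discount `γ`) satisfy `‖Q* − Q̂*‖_∞ ≤ γε/(1−γ)`. -/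
theorem optimal_Q_perturbation {S A : Type*} [Fintype S] [Fintype A] [Nonempty S] [Nonempty A]
    (P Phat : S → A → S → ℝ) (r : S → A → ℝ) (γ ε : ℝ)
    (hγ0 : 0 ≤ γ) (hγ1 : γ < 1) (hε : 0 ≤ ε)
    (hP : ∀ s a, (∀ s', 0 ≤ P s a s') ∧ ∑ s', P s a s' = 1)
    (hPhat : ∀ s a, (∀ s', 0 ≤ Phat s a s') ∧ ∑ s', Phat s a s' = 1)
    (hr : ∀ s a, 0 ≤ r s a ∧ r s a ≤ 1)
    (Qstar Qhat : S → A → ℝ)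
    (hQstar : ∀ s a, Qstar s a = r s a + γ * ∑ s', P s a s' * (⨆ a', Qstar s' a'))
    (hQhat : ∀ s a, Qhat s a = r s a + γ * ∑ s', Phat s a s' * (⨆ a', Qhat s' a'))
    (hclose : ∀ s a, |∑ s', (P s a s' - Phat s a s') * (⨆ a', Qstar s' a')| ≤ ε) :
    ∀ s a, |Qstar s a - Qhat s a| ≤ γ * ε / (1 - γ) := by
  have h1γ : (0:ℝ) < 1 - γ := by linarith
  obtain ⟨⟨s0, a0⟩, hmax⟩ := Finite.exists_max
    (fun p : S × A => |Qstar p.1 p.2 - Qhat p.1 p.2|)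
  set D := |Qstar s0 a0 - Qhat s0 a0| with hD
  have hDle : ∀ s a, |Qstar s a - Qhat s a| ≤ D := fun s a => hmax (s, a)
  have hD0 : 0 ≤ D := abs_nonneg _
  set V : S → ℝ := fun s => ⨆ a', Qstar s a' with hV
  set Vh : S → ℝ := fun s => ⨆ a', Qhat s a' with hVh
  have hVle : ∀ s', |V s' - Vh s'| ≤ D := by
    intro s'
    rw [abs_sub_le_iff]
    constructor
    · exact sup_sub_sup_le _ _ D (fun a => by linarith [abs_le.mp (hDle s' a) |>.2])
    · exact sup_sub_sup_le _ _ D (fun a => by linarith [abs_le.mp (hDle s' a) |>.1])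
  have key : D ≤ γ * ε + γ * D := by
    have hsplit : Qstar s0 a0 - Qhat s0 a0
        = γ * ((∑ s', (P s0 a0 s' - Phat s0 a0 s') * V s')
          + ∑ s', Phat s0 a0 s' * (V s' - Vh s')) := by
      rw [hQstar, hQhat]
      have he : ∀ s', (P s0 a0 s' - Phat s0 a0 s') * V s' + Phat s0 a0 s' * (V s' - Vh s')
          = P s0 a0 s' * V s' - Phat s0 a0 s' * Vh s' := fun s' => by ring
      rw [← Finset.sum_add_distrib]
      simp_rw [he]
      rw [Finset.sum_sub_distrib]
      ring
    have h2 : |∑ s', Phat s0 a0 s' * (V s' - Vh s')| ≤ D := by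
      calc |∑ s', Phat s0 a0 s' * (V s' - Vh s')|
          ≤ ∑ s', |Phat s0 a0 s' * (V s' - Vh s')| := Finset.abs_sum_le_sum_abs _ _
        _ ≤ ∑ s', Phat s0 a0 s' * D := by
            apply Finset.sum_le_sum
            intro s' _
            rw [abs_mul, abs_of_nonneg ((hPhat s0 a0).1 s')]
            exact mul_le_mul_of_nonneg_left (hVle s') ((hPhat s0 a0).1 s')
        _ = D := by rw [← Finset.sum_mul, (hPhat s0 a0).2, one_mul]
    calc D = |Qstar s0 a0 - Qhat s0 a0| := hD
      _ = γ * |(∑ s', (P s0 a0 s' - Phat s0 a0 s') * V s')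
            + ∑ s', Phat s0 a0 s' * (V s' - Vh s')| := by
          rw [hsplit, abs_mul, abs_of_nonneg hγ0]
      _ ≤ γ * (ε + D) := by
          apply mul_le_mul_of_nonneg_left _ hγ0
          exact (abs_add_le _ _).trans (add_le_add (hclose s0 a0) h2)
      _ = γ * ε + γ * D := by ring
  have hDbound : D ≤ γ * ε / (1 - γ) := by
    rw [le_div_iff₀ h1γ]
    nlinarith
  intro s a
  exact (hDle s a).trans hDbound
end

section
/- Let M be a discounted MDP with finite state space S, discount γ ∈ [0,1), and rewards in [0,1], and let π be any stationary policy with state-action transition matrix P^π and value function V^π (so 0 ≤ V^π(s) ≤ 1/(1−γ)). Define Var_P(V^π)(s,a) := Var_{s' ~ P(·|s,a)}(V^π(s')). Then ‖(I − γP^π)^{-1} √(Var_P(V^π))‖_∞ ≤ √(2/(1−γ)^3), where the square root is taken componentwise. -/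
/-- Comparison lemma for sub-stochastic kernels. -/
lemma tv_comp_lemma {T : Type*} [Fintype T] [Nonempty T] {γ : ℝ} (hγ1 : γ < 1)
    (K : T → T → ℝ) (hK0 : ∀ t t', 0 ≤ K t t') (hK1 : ∀ t, ∑ t', K t t' ≤ γ)
    (f g : T → ℝ)
    (h : ∀ t, f t - ∑ t', K t t' * f t' ≤ g t - ∑ t', K t t' * g t') :
    ∀ t, f t ≤ g t := by
  by_contra hc
  push_neg at hc
  obtain ⟨t1, ht1⟩ := hc
  obtain ⟨t0, -, ht0⟩ := Finset.exists_max_image Finset.univ (fun t => f t - g t)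
    ⟨t1, Finset.mem_univ _⟩
  have hmpos : 0 < f t0 - g t0 := lt_of_lt_of_le (by linarith) (ht0 t1 (Finset.mem_univ _))
  have h2 : f t0 - g t0 ≤ ∑ t', K t0 t' * (f t' - g t') := by
    have e : ∑ t', K t0 t' * (f t' - g t')
        = ∑ t', K t0 t' * f t' - ∑ t', K t0 t' * g t' := by
      rw [← Finset.sum_sub_distrib]
      exact Finset.sum_congr rfl fun t' _ => by ring
    rw [e]
    linarith [h t0]
  have h3 : ∑ t', K t0 t' * (f t' - g t') ≤ ∑ t', K t0 t' * (f t0 - g t0) :=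
    Finset.sum_le_sum fun t' _ =>
      mul_le_mul_of_nonneg_left (ht0 t' (Finset.mem_univ _)) (hK0 t0 t')
  have h4 : ∑ t', K t0 t' * (f t0 - g t0) ≤ γ * (f t0 - g t0) := by
    rw [← Finset.sum_mul]
    exact mul_le_mul_of_nonneg_right (hK1 t0) (le_of_lt hmpos)
  nlinarith

/-- Jensen for sqrt over a sub-probability vector. -/
lemma tv_jensen_sqrt {ι : Type*} (t : Finset ι) (p f : ι → ℝ)
    (hp : ∀ i ∈ t, 0 ≤ p i) (hp1 : ∑ i ∈ t, p i ≤ 1) (hf : ∀ i ∈ t, 0 ≤ f i) :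
    ∑ i ∈ t, p i * Real.sqrt (f i) ≤ Real.sqrt (∑ i ∈ t, p i * f i) := by
  have hsum : 0 ≤ ∑ i ∈ t, p i * f i :=
    Finset.sum_nonneg fun i hi => mul_nonneg (hp i hi) (hf i hi)
  have hL : 0 ≤ ∑ i ∈ t, p i * Real.sqrt (f i) :=
    Finset.sum_nonneg fun i hi => mul_nonneg (hp i hi) (Real.sqrt_nonneg _)
  rw [Real.le_sqrt hL hsum]
  have key : (∑ i ∈ t, p i * Real.sqrt (f i)) ^ 2
      ≤ (∑ i ∈ t, p i) * ∑ i ∈ t, p i * f i := by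
    have e : ∀ i ∈ t, p i * Real.sqrt (f i)
        = Real.sqrt (p i) * Real.sqrt (p i * f i) := by
      intro i hi
      rw [Real.sqrt_mul (hp i hi), ← mul_assoc, Real.mul_self_sqrt (hp i hi)]
    calc (∑ i ∈ t, p i * Real.sqrt (f i)) ^ 2
        = (∑ i ∈ t, Real.sqrt (p i) * Real.sqrt (p i * f i)) ^ 2 := by
          rw [Finset.sum_congr rfl e]
      _ ≤ (∑ i ∈ t, Real.sqrt (p i) ^ 2) * ∑ i ∈ t, Real.sqrt (p i * f i) ^ 2 :=
          Finset.sum_mul_sq_le_sq_mul_sq _ _ _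
      _ = (∑ i ∈ t, p i) * ∑ i ∈ t, p i * f i := by
          rw [Finset.sum_congr rfl fun i hi => Real.sq_sqrt (hp i hi),
            Finset.sum_congr rfl fun i hi => Real.sq_sqrt (mul_nonneg (hp i hi) (hf i hi))]
  calc (∑ i ∈ t, p i * Real.sqrt (f i)) ^ 2
      ≤ (∑ i ∈ t, p i) * ∑ i ∈ t, p i * f i := key
    _ ≤ 1 * ∑ i ∈ t, p i * f i := mul_le_mul_of_nonneg_right hp1 hsum
    _ = ∑ i ∈ t, p i * f i := one_mul _

/-- Jensen for square. -/
lemma tv_jensen_sq {ι : Type*} (t : Finset ι) (p f : ι → ℝ)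
    (hp : ∀ i ∈ t, 0 ≤ p i) (hp1 : ∑ i ∈ t, p i ≤ 1) :
    (∑ i ∈ t, p i * f i) ^ 2 ≤ ∑ i ∈ t, p i * f i ^ 2 := by
  have hsum : 0 ≤ ∑ i ∈ t, p i * f i ^ 2 :=
    Finset.sum_nonneg fun i hi => mul_nonneg (hp i hi) (sq_nonneg _)
  have e : ∀ i ∈ t, p i * f i = Real.sqrt (p i) * (Real.sqrt (p i) * f i) := by
    intro i hi
    rw [← mul_assoc, Real.mul_self_sqrt (hp i hi)]
  calc (∑ i ∈ t, p i * f i) ^ 2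
      = (∑ i ∈ t, Real.sqrt (p i) * (Real.sqrt (p i) * f i)) ^ 2 := by
        rw [Finset.sum_congr rfl e]
    _ ≤ (∑ i ∈ t, Real.sqrt (p i) ^ 2) * ∑ i ∈ t, (Real.sqrt (p i) * f i) ^ 2 :=
        Finset.sum_mul_sq_le_sq_mul_sq _ _ _
    _ = (∑ i ∈ t, p i) * ∑ i ∈ t, p i * f i ^ 2 := by
        rw [Finset.sum_congr rfl fun i hi => Real.sq_sqrt (hp i hi)]
        congr 1
        exact Finset.sum_congr rfl fun i hi => by
          rw [mul_pow, Real.sq_sqrt (hp i hi)]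
    _ ≤ 1 * ∑ i ∈ t, p i * f i ^ 2 := mul_le_mul_of_nonneg_right hp1 hsum
    _ = _ := one_mul _

/-- Cauchy–Schwarz finishing step. -/
lemma tv_cs_step (x h γ : ℝ) (hx : 0 ≤ x) (hxh : x ≤ h) (hγ0 : 0 ≤ γ) (hγ1 : γ < 1) :
    Real.sqrt x + Real.sqrt (γ * (h - x) / (1 - γ)) ≤ Real.sqrt (h / (1 - γ)) := by
  have h1γ : (0:ℝ) < 1 - γ := by linarith
  set A := γ * x / (1 - γ) with hA
  set B' := h - x with hB'
  have hAnn : 0 ≤ A := by positivity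
  have hB'nn : 0 ≤ B' := by linarith
  have hBnn : 0 ≤ γ * (h - x) / (1 - γ) := div_nonneg (mul_nonneg hγ0 hB'nn) h1γ.le
  have hLnn : 0 ≤ Real.sqrt x + Real.sqrt (γ * (h - x) / (1 - γ)) := add_nonneg (Real.sqrt_nonneg _) (Real.sqrt_nonneg _)
  have hRnn : 0 ≤ h / (1 - γ) := div_nonneg (hx.trans hxh) h1γ.le
  rw [Real.le_sqrt hLnn hRnn]
  have e1 : Real.sqrt x * Real.sqrt (γ * (h - x) / (1 - γ))
      = Real.sqrt A * Real.sqrt B' := by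
    rw [← Real.sqrt_mul hx, ← Real.sqrt_mul hAnn]
    congr 1
    ring
  have amgm : 2 * (Real.sqrt A * Real.sqrt B') ≤ A + B' := by
    nlinarith [sq_nonneg (Real.sqrt A - Real.sqrt B'), Real.sq_sqrt hAnn, Real.sq_sqrt hB'nn]
  have hx2 := Real.sq_sqrt hx
  have hB2 := Real.sq_sqrt hBnn
  have efin : x + (γ * (h - x) / (1 - γ)) + (A + B') = h / (1 - γ) := by
    rw [hA, hB']
    field_simp
    ring
  nlinarith [e1]

lemma tv_key_poly (γ r m q : ℝ) (hγ0 : 0 ≤ γ) (hγ1 : γ < 1) (hr0 : 0 ≤ r) (hr1 : r ≤ 1)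
    (hq : q = r + γ * m) :
    4 * (1 - γ ^ 2) * (m - m ^ 2 + q ^ 2) ≤ 4 * r * (1 + γ) + 1 := by
  subst hq
  nlinarith [sq_nonneg (1 + 2 * γ * r - 2 * (1 - γ ^ 2) * m),
    mul_nonneg hr0 (by linarith : (0:ℝ) ≤ 1 - r)]

lemma tv_key (γ r m S2 C q : ℝ) (hγ0 : 0 ≤ γ) (hγ1 : γ < 1) (hr0 : 0 ≤ r) (hr1 : r ≤ 1)
    (hq : q = r + γ * m) (hS2 : (1 - γ) * S2 ≤ m)
    (hC : C = 1 / (4 * (1 - γ ^ 2) * (1 - γ))) :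
    γ * (m / (1 - γ) - S2 + C) ≤ (q / (1 - γ) - q ^ 2 + C) - (S2 - m ^ 2) := by
  have h1γ : (0:ℝ) < 1 - γ := by linarith
  have h1γ2 : (0:ℝ) < 1 - γ ^ 2 := by nlinarith
  have poly := tv_key_poly γ r m q hγ0 hγ1 hr0 hr1 hq
  have hS2' : 4 * (1 - γ ^ 2) * ((1 - γ) * S2) ≤ 4 * (1 - γ ^ 2) * m :=
    mul_le_mul_of_nonneg_left hS2 (by positivity)
  rw [hC, hq] at *
  rw [← sub_nonneg]
  have expand : ((r + γ * m) / (1 - γ) - (r + γ * m) ^ 2 +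
        1 / (4 * (1 - γ ^ 2) * (1 - γ)) - (S2 - m ^ 2)) -
      γ * (m / (1 - γ) - S2 + 1 / (4 * (1 - γ ^ 2) * (1 - γ)))
      = ((4 * r * (1 + γ) + 1 - 4 * (1 - γ ^ 2) * (m - m ^ 2 + (r + γ * m) ^ 2))
          + (4 * (1 - γ ^ 2) * m - 4 * (1 - γ ^ 2) * ((1 - γ) * S2)))
        / (4 * (1 - γ ^ 2)) := by
    field_simp
    ring
  rw [expand]
  apply div_nonneg _ (by positivity)
  linarith


/-- total variance lemma: for a stationary policy `π` in a finite discounted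
MDP with rewards in `[0,1]`, the vector `u = (I − γP^π)^{-1} √(Var_P(V^π))` (encoded as the
unique solution of `u = √(Var_P(V^π)) + γ P^π u`) satisfies `‖u‖_∞ ≤ √(2/(1−γ)³)`. -/
theorem total_variance_lemma {S A : Type*} [Fintype S] [Fintype A] [Nonempty S] [Nonempty A]
    (P : S → A → S → ℝ) (π : S → A → ℝ) (r : S → A → ℝ)
    (γ : ℝ) (hγ0 : 0 ≤ γ) (hγ1 : γ < 1)
    (hP : ∀ s a, (∀ s', 0 ≤ P s a s') ∧ ∑ s', P s a s' = 1)
    (hπ : ∀ s, (∀ a, 0 ≤ π s a) ∧ ∑ a, π s a = 1)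
    (hr : ∀ s a, 0 ≤ r s a ∧ r s a ≤ 1)
    (V : S → ℝ)
    (hV : ∀ s, V s = ∑ a, π s a * (r s a + γ * ∑ s', P s a s' * V s'))
    (u : S → A → ℝ)
    (hu : ∀ s a, u s a =
        Real.sqrt ((∑ s', P s a s' * (V s') ^ 2) - (∑ s', P s a s' * V s') ^ 2)
          + γ * ∑ s', P s a s' * ∑ a', π s' a' * u s' a') :
    ∀ s a, |u s a| ≤ Real.sqrt (2 / (1 - γ) ^ 3) := by
  have h1γ : (0:ℝ) < 1 - γ := by linarith
  have h1γ2 : (0:ℝ) < 1 - γ ^ 2 := by nlinarith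
  -- state-level kernel
  set KS : S → S → ℝ := fun s s' => γ * ∑ a, π s a * P s a s' with hKS
  have hKS0 : ∀ s s', 0 ≤ KS s s' := fun s s' =>
    mul_nonneg hγ0 (Finset.sum_nonneg fun a _ => mul_nonneg ((hπ s).1 a) ((hP s a).1 s'))
  have hKS1 : ∀ s, ∑ s', KS s s' = γ := by
    intro s
    simp only [hKS]
    rw [← Finset.mul_sum, Finset.sum_comm]
    have e2 : ∀ a ∈ Finset.univ, ∑ s', π s a * P s a s' = π s a := fun a _ => by
      rw [← Finset.mul_sum, (hP s a).2, mul_one]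
    rw [Finset.sum_congr rfl e2, (hπ s).2, mul_one]
  have hKSV : ∀ (W : S → ℝ) s, ∑ s', KS s s' * W s'
      = γ * ∑ a, π s a * ∑ s', P s a s' * W s' := by
    intro W s
    simp only [hKS]
    have e1 : ∀ s' ∈ Finset.univ, γ * (∑ a, π s a * P s a s') * W s'
        = γ * ∑ a, π s a * P s a s' * W s' := by
      intro s' _
      rw [mul_assoc, Finset.sum_mul]
    rw [Finset.sum_congr rfl e1, ← Finset.mul_sum, Finset.sum_comm]
    congr 1
    refine Finset.sum_congr rfl fun a _ => ?_
    rw [Finset.mul_sum]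
    exact Finset.sum_congr rfl fun s' _ => by ring
  have hVfix : ∀ s, V s - ∑ s', KS s s' * V s' = ∑ a, π s a * r s a := by
    intro s
    rw [hKSV V s]
    nth_rewrite 1 [hV s]
    have e : ∑ a, π s a * (r s a + γ * ∑ s', P s a s' * V s')
        = ∑ a, π s a * r s a + γ * ∑ a, π s a * ∑ s', P s a s' * V s' := by
      rw [Finset.mul_sum, ← Finset.sum_add_distrib]
      exact Finset.sum_congr rfl fun a _ => by ring
    rw [e]
    ring
  have hV0 : ∀ s, 0 ≤ V s := by
    apply tv_comp_lemma hγ1 KS hKS0 (fun s => (hKS1 s).le) (fun _ => 0) V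
    intro s
    simp only [mul_zero, Finset.sum_const_zero, sub_zero]
    rw [hVfix s]
    exact Finset.sum_nonneg fun a _ => mul_nonneg ((hπ s).1 a) (hr s a).1
  have hV1 : ∀ s, V s ≤ 1 / (1 - γ) := by
    apply tv_comp_lemma hγ1 KS hKS0 (fun s => (hKS1 s).le) V (fun _ => 1 / (1 - γ))
    intro s
    rw [hVfix s, ← Finset.sum_mul, hKS1 s]
    have h2 : ∑ a, π s a * r s a ≤ 1 := by
      calc ∑ a, π s a * r s a ≤ ∑ a, π s a * 1 :=
            Finset.sum_le_sum fun a _ => mul_le_mul_of_nonneg_left (hr s a).2 ((hπ s).1 a)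
        _ = 1 := by simp [(hπ s).2]
    have e : 1 / (1 - γ) - γ * (1 / (1 - γ)) = 1 := by field_simp
    linarith
  -- Q function
  set Q : S → A → ℝ := fun s a => r s a + γ * ∑ s', P s a s' * V s' with hQdef
  have hPV0 : ∀ s a, 0 ≤ ∑ s', P s a s' * V s' := fun s a =>
    Finset.sum_nonneg fun s' _ => mul_nonneg ((hP s a).1 s') (hV0 s')
  have hPV1 : ∀ s a, ∑ s', P s a s' * V s' ≤ 1 / (1 - γ) := by
    intro s a
    calc ∑ s', P s a s' * V s' ≤ ∑ s', P s a s' * (1 / (1 - γ)) :=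
          Finset.sum_le_sum fun s' _ => mul_le_mul_of_nonneg_left (hV1 s') ((hP s a).1 s')
      _ = 1 / (1 - γ) := by rw [← Finset.sum_mul, (hP s a).2, one_mul]
  have hQ0 : ∀ s a, 0 ≤ Q s a := fun s a =>
    add_nonneg (hr s a).1 (mul_nonneg hγ0 (hPV0 s a))
  have hQ1 : ∀ s a, Q s a ≤ 1 / (1 - γ) := by
    intro s a
    have h2 := mul_le_mul_of_nonneg_left (hPV1 s a) hγ0
    have e : 1 + γ * (1 / (1 - γ)) = 1 / (1 - γ) := by field_simp; ring
    simp only [hQdef]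
    linarith [(hr s a).2]
  have hVQ : ∀ s', V s' = ∑ a', π s' a' * Q s' a' := by
    intro s'
    simp only [hQdef]
    exact hV s'
  -- H and C
  set C : ℝ := 1 / (4 * (1 - γ ^ 2) * (1 - γ)) with hCdef
  have hC0 : 0 < C := by rw [hCdef]; positivity
  set H : S → A → ℝ := fun s a => Q s a / (1 - γ) - Q s a ^ 2 + C with hHdef
  have hQsq : ∀ s a, Q s a ^ 2 ≤ Q s a / (1 - γ) := by
    intro s a
    have := mul_le_mul_of_nonneg_left (hQ1 s a) (hQ0 s a)
    calc Q s a ^ 2 = Q s a * Q s a := sq (Q s a) ▸ by ring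
      _ ≤ Q s a * (1 / (1 - γ)) := this
      _ = Q s a / (1 - γ) := by ring
  have hH0 : ∀ s a, 0 ≤ H s a := by
    intro s a
    simp only [hHdef]
    linarith [hQsq s a]
  have hH2 : ∀ s a, H s a ≤ 2 / (1 - γ) ^ 2 := by
    intro s a
    have h1 : Q s a / (1 - γ) ≤ 1 / (1 - γ) ^ 2 := by
      rw [div_le_div_iff₀ h1γ (by positivity)]
      have := (le_div_iff₀ h1γ).mp (hQ1 s a)
      nlinarith
    have h2 : C ≤ 1 / (1 - γ) ^ 2 := by
      rw [hCdef, div_le_div_iff₀ (by positivity) (by positivity)]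
      nlinarith
    have e : (1:ℝ) / (1 - γ) ^ 2 + 1 / (1 - γ) ^ 2 = 2 / (1 - γ) ^ 2 := by ring
    simp only [hHdef]
    nlinarith [sq_nonneg (Q s a)]
  -- product kernel
  set KT : S × A → S × A → ℝ := fun t t' => γ * (P t.1 t.2 t'.1 * π t'.1 t'.2) with hKT
  have hKT0 : ∀ t t' : S × A, 0 ≤ KT t t' := fun t t' =>
    mul_nonneg hγ0 (mul_nonneg ((hP _ _).1 _) ((hπ _).1 _))
  have hKTsum : ∀ (W : S → A → ℝ) (t : S × A), ∑ t', KT t t' * W t'.1 t'.2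
      = γ * ∑ s', P t.1 t.2 s' * ∑ a', π s' a' * W s' a' := by
    intro W t
    rw [Fintype.sum_prod_type]
    simp only [hKT, Finset.mul_sum]
    exact Finset.sum_congr rfl fun s' _ => Finset.sum_congr rfl fun a' _ => by ring
  have hKT1 : ∀ t : S × A, ∑ t', KT t t' = γ := by
    intro t
    have := hKTsum (fun _ _ => 1) t
    simp only [mul_one] at this
    rw [this]
    have e : ∀ s' ∈ Finset.univ, P t.1 t.2 s' * ∑ a', π s' a' = P t.1 t.2 s' := fun s' _ => by
      rw [(hπ s').2, mul_one]
    rw [Finset.sum_congr rfl e, (hP t.1 t.2).2, mul_one]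
  -- double sum with weights P*π
  have prod_eq : ∀ (s : S) (a : A) (W : S → A → ℝ),
      ∑ t' : S × A, (P s a t'.1 * π t'.1 t'.2) * W t'.1 t'.2
        = ∑ s', P s a s' * ∑ a', π s' a' * W s' a' := by
    intro s a W
    rw [Fintype.sum_prod_type]
    simp only [Finset.mul_sum]
    exact Finset.sum_congr rfl fun s' _ => Finset.sum_congr rfl fun a' _ => by ring
  have pnn : ∀ (s : S) (a : A) (t' : S × A), 0 ≤ P s a t'.1 * π t'.1 t'.2 := fun s a t' =>
    mul_nonneg ((hP s a).1 _) ((hπ _).1 _)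
  have psum1 : ∀ (s : S) (a : A), ∑ t' : S × A, P s a t'.1 * π t'.1 t'.2 = 1 := by
    intro s a
    have := prod_eq s a (fun _ _ => 1)
    simp only [mul_one] at this
    rw [this]
    have e : ∀ s' ∈ Finset.univ, P s a s' * ∑ a', π s' a' = P s a s' := fun s' _ => by
      rw [(hπ s').2, mul_one]
    rw [Finset.sum_congr rfl e, (hP s a).2]
  -- fixed point equation for u on the product space
  set σf : S × A → ℝ := fun t =>
    Real.sqrt ((∑ s', P t.1 t.2 s' * (V s') ^ 2) - (∑ s', P t.1 t.2 s' * V s') ^ 2) with hσ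
  have hufix : ∀ t : S × A, u t.1 t.2 - ∑ t', KT t t' * u t'.1 t'.2 = σf t := by
    intro t
    rw [hKTsum (fun s a => u s a) t]
    simp only [hσ]
    linarith [hu t.1 t.2]
  -- nonnegativity of u
  have hu0 : ∀ t : S × A, 0 ≤ u t.1 t.2 := by
    apply tv_comp_lemma hγ1 KT hKT0 (fun t => (hKT1 t).le) (fun _ => 0) (fun t => u t.1 t.2)
    intro t
    simp only [mul_zero, Finset.sum_const_zero, sub_zero]
    rw [hufix t]
    exact Real.sqrt_nonneg _
  -- the super-solution G
  set G : S × A → ℝ := fun t => Real.sqrt (H t.1 t.2 / (1 - γ)) with hG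
  have hGsuper : ∀ t : S × A, σf t ≤ G t - ∑ t', KT t t' * G t' := by
    intro t
    obtain ⟨s, a⟩ := t
    set m : ℝ := ∑ s', P s a s' * V s' with hm
    set SV2 : ℝ := ∑ s', P s a s' * V s' ^ 2 with hSV2
    set S2Q : ℝ := ∑ s', P s a s' * ∑ a', π s' a' * Q s' a' ^ 2 with hS2Q
    set PH : ℝ := ∑ s', P s a s' * ∑ a', π s' a' * H s' a' with hPH
    -- inner second-moment bounds
    have hinner1 : ∀ s', ∑ a', π s' a' * Q s' a' ^ 2 ≤ V s' / (1 - γ) := by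
      intro s'
      calc ∑ a', π s' a' * Q s' a' ^ 2 ≤ ∑ a', π s' a' * (Q s' a' / (1 - γ)) :=
            Finset.sum_le_sum fun a' _ =>
              mul_le_mul_of_nonneg_left (hQsq s' a') ((hπ s').1 a')
        _ = (∑ a', π s' a' * Q s' a') / (1 - γ) := by
            rw [Finset.sum_div]
            exact Finset.sum_congr rfl fun a' _ => by ring
        _ = V s' / (1 - γ) := by rw [← hVQ s']
    have hS2Qle : (1 - γ) * S2Q ≤ m := by
      have h1 : S2Q ≤ m / (1 - γ) := by
        rw [hS2Q, hm]
        calc ∑ s', P s a s' * ∑ a', π s' a' * Q s' a' ^ 2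
            ≤ ∑ s', P s a s' * (V s' / (1 - γ)) :=
              Finset.sum_le_sum fun s' _ =>
                mul_le_mul_of_nonneg_left (hinner1 s') ((hP s a).1 s')
          _ = (∑ s', P s a s' * V s') / (1 - γ) := by
              rw [Finset.sum_div]
              exact Finset.sum_congr rfl fun s' _ => by ring
      rw [mul_comm, ← le_div_iff₀ h1γ]
      exact h1
    -- PH expansion
    have hinnerH : ∀ s', ∑ a', π s' a' * H s' a'
        = V s' / (1 - γ) - (∑ a', π s' a' * Q s' a' ^ 2) + C := by
      intro s'
      simp only [hHdef]
      calc ∑ a', π s' a' * (Q s' a' / (1 - γ) - Q s' a' ^ 2 + C)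
          = ∑ a', (π s' a' * Q s' a' / (1 - γ) - π s' a' * Q s' a' ^ 2 + π s' a' * C) :=
            Finset.sum_congr rfl fun a' _ => by ring
        _ = (∑ a', π s' a' * Q s' a') / (1 - γ) - (∑ a', π s' a' * Q s' a' ^ 2)
              + (∑ a', π s' a') * C := by
            rw [Finset.sum_add_distrib, Finset.sum_sub_distrib, Finset.sum_div, ← Finset.sum_mul]
        _ = V s' / (1 - γ) - (∑ a', π s' a' * Q s' a' ^ 2) + C := by
            rw [← hVQ s', (hπ s').2, one_mul]
    have hPHeq : PH = m / (1 - γ) - S2Q + C := by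
      rw [hPH, hm, hS2Q]
      calc ∑ s', P s a s' * ∑ a', π s' a' * H s' a'
          = ∑ s', (P s a s' * V s' / (1 - γ) - P s a s' * (∑ a', π s' a' * Q s' a' ^ 2)
              + P s a s' * C) := by
            refine Finset.sum_congr rfl fun s' _ => ?_
            rw [hinnerH s']
            ring
        _ = (∑ s', P s a s' * V s') / (1 - γ)
              - (∑ s', P s a s' * ∑ a', π s' a' * Q s' a' ^ 2) + (∑ s', P s a s') * C := by
            rw [Finset.sum_add_distrib, Finset.sum_sub_distrib, Finset.sum_div, ← Finset.sum_mul]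
        _ = _ := by rw [(hP s a).2, one_mul]
    -- key inequality
    have hkey : γ * PH ≤ H s a - (S2Q - m ^ 2) := by
      have := tv_key γ (r s a) m S2Q C (Q s a) hγ0 hγ1 (hr s a).1 (hr s a).2
        (by simp only [hQdef, hm]) hS2Qle hCdef
      rw [hPHeq]
      simp only [hHdef] at this ⊢
      linarith
    -- variance comparisons
    have hVar0 : m ^ 2 ≤ SV2 := by
      rw [hm, hSV2]
      exact tv_jensen_sq Finset.univ (P s a) V (fun s' _ => (hP s a).1 s') (hP s a).2.le
    have hVarle : SV2 ≤ S2Q := by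
      rw [hSV2, hS2Q]
      refine Finset.sum_le_sum fun s' _ => mul_le_mul_of_nonneg_left ?_ ((hP s a).1 s')
      have := tv_jensen_sq Finset.univ (π s') (Q s') (fun a' _ => (hπ s').1 a') (hπ s').2.le
      rw [← hVQ s'] at this
      exact this
    have hPHnn : 0 ≤ PH := by
      rw [hPH]
      exact Finset.sum_nonneg fun s' _ => mul_nonneg ((hP s a).1 s')
        (Finset.sum_nonneg fun a' _ => mul_nonneg ((hπ s').1 a') (hH0 s' a'))
    have hVarH : SV2 - m ^ 2 ≤ H s a := by
      nlinarith [mul_nonneg hγ0 hPHnn]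
    -- Jensen for G
    have hGjen : ∑ s', P s a s' * ∑ a', π s' a' * G (s', a')
        ≤ Real.sqrt (PH / (1 - γ)) := by
      have e1 : ∑ s', P s a s' * ∑ a', π s' a' * G (s', a')
          = ∑ t' : S × A, (P s a t'.1 * π t'.1 t'.2) * Real.sqrt (H t'.1 t'.2 / (1 - γ)) := by
        rw [prod_eq s a (fun s' a' => G (s', a'))]
      have e2 : ∑ t' : S × A, (P s a t'.1 * π t'.1 t'.2) * (H t'.1 t'.2 / (1 - γ))
          = PH / (1 - γ) := by
        rw [hPH, ← prod_eq s a (fun s' a' => H s' a'), Finset.sum_div]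
        exact Finset.sum_congr rfl fun t' _ => by ring
      rw [e1, ← e2]
      exact tv_jensen_sqrt Finset.univ _ _ (fun t' _ => pnn s a t') (psum1 s a).le
        (fun t' _ => div_nonneg (hH0 t'.1 t'.2) h1γ.le)
    -- assemble
    have hKTG : ∑ t', KT (s, a) t' * G t'
        = γ * ∑ s', P s a s' * ∑ a', π s' a' * G (s', a') := by
      have := hKTsum (fun s' a' => G (s', a')) (s, a)
      simpa using this
    rw [hKTG]
    have step1 : γ * ∑ s', P s a s' * ∑ a', π s' a' * G (s', a')
        ≤ γ * Real.sqrt (PH / (1 - γ)) := mul_le_mul_of_nonneg_left hGjen hγ0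
    have step2 : γ * Real.sqrt (PH / (1 - γ))
        = Real.sqrt (γ ^ 2 * (PH / (1 - γ))) := by
      rw [Real.sqrt_mul (sq_nonneg γ), Real.sqrt_sq hγ0]
    have hnum : γ ^ 2 * PH ≤ γ * (H s a - (SV2 - m ^ 2)) := by
      have k1 := mul_le_mul_of_nonneg_left hkey hγ0
      have k2 : 0 ≤ γ * (S2Q - SV2) := mul_nonneg hγ0 (sub_nonneg.mpr hVarle)
      nlinarith
    have step3 : γ ^ 2 * (PH / (1 - γ)) ≤ γ * (H s a - (SV2 - m ^ 2)) / (1 - γ) := by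
      rw [show γ ^ 2 * (PH / (1 - γ)) = γ ^ 2 * PH / (1 - γ) from by ring,
        div_le_div_iff₀ h1γ h1γ]
      nlinarith [hnum]
    have step5 : Real.sqrt (γ ^ 2 * (PH / (1 - γ)))
        ≤ Real.sqrt (γ * (H s a - (SV2 - m ^ 2)) / (1 - γ)) := Real.sqrt_le_sqrt step3
    have step4 := tv_cs_step (SV2 - m ^ 2) (H s a) γ (by linarith [hVar0]) hVarH hγ0 hγ1
    have hσeq : σf (s, a) = Real.sqrt (SV2 - m ^ 2) := by simp only [hσ, hSV2, hm]
    have hGeq : G (s, a) = Real.sqrt (H s a / (1 - γ)) := by simp only [hG]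
    rw [hσeq, hGeq]
    linarith [step1, step2, step4, step5]
  -- conclude
  have hule : ∀ t : S × A, u t.1 t.2 ≤ G t := by
    apply tv_comp_lemma hγ1 KT hKT0 (fun t => (hKT1 t).le) (fun t => u t.1 t.2) G
    intro t
    rw [hufix t]
    linarith [hGsuper t]
  intro s a
  rw [abs_of_nonneg (hu0 (s, a))]
  refine le_trans (hule (s, a)) ?_
  have hH3 : H s a / (1 - γ) ≤ 2 / (1 - γ) ^ 3 := by
    rw [div_le_div_iff₀ h1γ (by positivity)]
    have h2' : H s a * (1 - γ) ^ 2 ≤ 2 := (le_div_iff₀ (by positivity : (0:ℝ) < (1 - γ) ^ 2)).mp (hH2 s a)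
    nlinarith [h2']
  have hGeq : G (s, a) = Real.sqrt (H s a / (1 - γ)) := by simp only [hG]
  rw [hGeq]
  exact Real.sqrt_le_sqrt hH3
end

section
/- Let M be a finite discounted MDP with rewards in [0,1] and discount γ ∈ [0,1). For a state s and scalars u, u', let M_{s,u} be the MDP identical to M except that state s is absorbing with per-step reward (1−γ)u. Then for every stationary policy π, ‖Q^π_{M_{s,u}} − Q^π_{M_{s,u'}}‖_∞ ≤ |u − u'|. -/
/-- let `M_{s₀,u}` be the MDP identical to `M` except state `s₀` is absorbing
with per-step reward `(1−γ)u`. For every stationary policy `π`, the Q-functions satisfy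
`‖Q^π_{M_{s₀,u}} − Q^π_{M_{s₀,u'}}‖_∞ ≤ |u − u'|`. -/
theorem absorbing_mdp_stability {S A : Type*} [Fintype S] [Fintype A] [Nonempty S] [Nonempty A]
    [DecidableEq S]
    (P : S → A → S → ℝ) (π : S → A → ℝ) (r : S → A → ℝ)
    (γ : ℝ) (hγ0 : 0 ≤ γ) (hγ1 : γ < 1)
    (hP : ∀ s a, (∀ s', 0 ≤ P s a s') ∧ ∑ s', P s a s' = 1)
    (hπ : ∀ s, (∀ a, 0 ≤ π s a) ∧ ∑ a, π s a = 1)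
    (hr : ∀ s a, 0 ≤ r s a ∧ r s a ≤ 1)
    (s₀ : S) (u u' : ℝ) (Qu Qu' : S → A → ℝ)
    (hQu : ∀ s a, Qu s a =
        (if s = s₀ then (1 - γ) * u else r s a)
          + γ * ∑ s', (if s = s₀ then (if s' = s₀ then (1 : ℝ) else 0) else P s a s')
              * ∑ a', π s' a' * Qu s' a')
    (hQu' : ∀ s a, Qu' s a =
        (if s = s₀ then (1 - γ) * u' else r s a)
          + γ * ∑ s', (if s = s₀ then (if s' = s₀ then (1 : ℝ) else 0) else P s a s')
              * ∑ a', π s' a' * Qu' s' a') :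
    ∀ s a, |Qu s a - Qu' s a| ≤ |u - u'| := by
  set D : S → A → ℝ := fun s a => Qu s a - Qu' s a with hD
  have hne : (Finset.univ : Finset (S × A)).Nonempty := Finset.univ_nonempty
  set C : ℝ := Finset.univ.sup' hne (fun p : S × A => |D p.1 p.2|) with hC
  have hle : ∀ s a, |D s a| ≤ C := fun s a =>
    Finset.le_sup' (fun p : S × A => |D p.1 p.2|) (Finset.mem_univ (s, a))
  have hCnn : 0 ≤ C :=
    le_trans (abs_nonneg _) (hle (Classical.arbitrary S) (Classical.arbitrary A))
  -- the weight matrix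
  set W : S → A → S → ℝ := fun s a s' =>
    if s = s₀ then (if s' = s₀ then (1 : ℝ) else 0) else P s a s' with hW
  have hWnn : ∀ s a s', 0 ≤ W s a s' := by
    intro s a s'
    simp only [hW]
    split_ifs with h1 h2
    · norm_num
    · norm_num
    · exact (hP s a).1 s'
  have hWsum : ∀ s a, ∑ s', W s a s' = 1 := by
    intro s a
    simp only [hW]
    split_ifs with h
    · simp
    · exact (hP s a).2
  -- inner bound
  have hinner : ∀ s', |∑ a', π s' a' * D s' a'| ≤ C := by
    intro s'
    calc |∑ a', π s' a' * D s' a'| ≤ ∑ a', |π s' a' * D s' a'| :=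
          Finset.abs_sum_le_sum_abs _ _
      _ = ∑ a', π s' a' * |D s' a'| := by
          refine Finset.sum_congr rfl fun a' _ => ?_
          rw [abs_mul, abs_of_nonneg ((hπ s').1 a')]
      _ ≤ ∑ a', π s' a' * C :=
          Finset.sum_le_sum fun a' _ =>
            mul_le_mul_of_nonneg_left (hle s' a') ((hπ s').1 a')
      _ = C := by rw [← Finset.sum_mul, (hπ s').2, one_mul]
  have key : ∀ s a, |D s a| ≤ (1 - γ) * |u - u'| + γ * C := by
    intro s a
    have hrec : D s a = (if s = s₀ then (1 - γ) * (u - u') else 0)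
        + γ * ∑ s', W s a s' * ∑ a', π s' a' * D s' a' := by
      simp only [hD, hW]
      rw [hQu s a, hQu' s a]
      simp only [Finset.mul_sum, ← Finset.sum_sub_distrib, mul_sub, ← mul_assoc]
      split_ifs with h <;> ring_nf <;> simp [Finset.sum_sub_distrib] <;> ring
    rw [hrec]
    have h1 : |(if s = s₀ then (1 - γ) * (u - u') else 0)| ≤ (1 - γ) * |u - u'| := by
      split_ifs with h
      · rw [abs_mul, abs_of_nonneg (by linarith : (0:ℝ) ≤ 1 - γ)]
      · simpa using mul_nonneg (by linarith : (0:ℝ) ≤ 1 - γ) (abs_nonneg (u - u'))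
    have h2 : |∑ s', W s a s' * ∑ a', π s' a' * D s' a'| ≤ C := by
      calc |∑ s', W s a s' * ∑ a', π s' a' * D s' a'|
          ≤ ∑ s', |W s a s' * ∑ a', π s' a' * D s' a'| := Finset.abs_sum_le_sum_abs _ _
        _ = ∑ s', W s a s' * |∑ a', π s' a' * D s' a'| := by
            refine Finset.sum_congr rfl fun s' _ => ?_
            rw [abs_mul, abs_of_nonneg (hWnn s a s')]
        _ ≤ ∑ s', W s a s' * C :=
            Finset.sum_le_sum fun s' _ =>
              mul_le_mul_of_nonneg_left (hinner s') (hWnn s a s')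
        _ = C := by rw [← Finset.sum_mul, hWsum s a, one_mul]
    calc |(if s = s₀ then (1 - γ) * (u - u') else 0)
          + γ * ∑ s', W s a s' * ∑ a', π s' a' * D s' a'|
        ≤ |(if s = s₀ then (1 - γ) * (u - u') else 0)|
          + |γ * ∑ s', W s a s' * ∑ a', π s' a' * D s' a'| := abs_add_le _ _
      _ ≤ (1 - γ) * |u - u'| + γ * C := by
          refine add_le_add h1 ?_
          rw [abs_mul, abs_of_nonneg hγ0]
          exact mul_le_mul_of_nonneg_left h2 hγ0
  have hCle : C ≤ (1 - γ) * |u - u'| + γ * C := by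
    rw [hC]
    exact Finset.sup'_le hne _ fun p _ => key p.1 p.2
  have hfinal : C ≤ |u - u'| := by nlinarith [abs_nonneg (u - u')]
  intro s a
  exact le_trans (hle s a) hfinal
end

section
/- Let p ∈ (1, ∞) and let Q(s,·) ∈ ℝ^A with A finite, and σ > 0 with σ ≤ max_a Q(s,a) − min_a Q(s,a) + σ (i.e., a solution exists in the stated interval). Then the function g(x) := ∑_a (Q(s,a) − x)^p · 1{Q(s,a) ≥ x} is continuous and strictly decreasing on (−∞, max_a Q(s,a)), tends to 0 as x → max_a Q(s,a), and satisfies g(max_a Q(s,a) − σ) ≥ σ^p; hence the equation g(x) = σ^p has a unique solution x* in [max_a Q(s,a) − σ, max_a Q(s,a)). -/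
open Filter Topology

/-- for `p ∈ (1,∞)`, `Q : A → ℝ` on a finite action set and `σ > 0`, the
function `g(x) = ∑_a (Q(a) − x)^p·1{Q(a) ≥ x}` is continuous, strictly decreasing on
`(−∞, max_a Q(a))`, tends to `0` as `x → max_a Q(a)`, and satisfies
`g(max_a Q(a) − σ) ≥ σ^p`; hence the equation `g(x) = σ^p` has a unique solution in
`[max_a Q(a) − σ, max_a Q(a))`. -/
theorem robust_bellman_scalar_root {A : Type*} [Fintype A] [Nonempty A]
    (p : ℝ) (hp : 1 < p) (Q : A → ℝ) (σ : ℝ) (hσ : 0 < σ) :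
    let M : ℝ := ⨆ a, Q a
    let g : ℝ → ℝ := fun x => ∑ a, (max (Q a - x) 0) ^ p
    Continuous g ∧
    StrictAntiOn g (Set.Iio M) ∧
    Tendsto g (𝓝[<] M) (𝓝 0) ∧
    σ ^ p ≤ g (M - σ) ∧
    ∃! x : ℝ, x ∈ Set.Ico (M - σ) M ∧ g x = σ ^ p := by
  intro M g
  have hp0 : (0:ℝ) < p := by linarith
  obtain ⟨a₀, ha₀⟩ := Finite.exists_max Q
  have hbdd : BddAbove (Set.range Q) := (Set.finite_range Q).bddAbove
  have hQle : ∀ a, Q a ≤ M := fun a => le_ciSup hbdd a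
  have hM : M = Q a₀ := le_antisymm (ciSup_le ha₀) (le_ciSup hbdd a₀)
  have hgcont : Continuous g := by
    apply continuous_finset_sum
    intro a _
    exact (Continuous.max (by continuity) continuous_const).rpow_const
      (fun x => Or.inr hp0.le)
  have hgM : g M = 0 := by
    apply Finset.sum_eq_zero
    intro a _
    rw [max_eq_right (by linarith [hQle a]), Real.zero_rpow (by linarith)]
  have hanti : StrictAntiOn g (Set.Iio M) := by
    intro x hx y hy hxy
    apply Finset.sum_lt_sum
    · intro a _
      exact Real.rpow_le_rpow (le_max_right _ _)
        (max_le_max (by linarith) le_rfl) hp0.le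
    · refine ⟨a₀, Finset.mem_univ _, ?_⟩
      have h1 : y < Q a₀ := hM ▸ hy
      rw [max_eq_left (by linarith : (0:ℝ) ≤ Q a₀ - y),
        max_eq_left (by linarith : (0:ℝ) ≤ Q a₀ - x)]
      exact Real.rpow_lt_rpow (by linarith) (by linarith) hp0
  have hσp : σ ^ p ≤ g (M - σ) := by
    have h1 : (max (Q a₀ - (M - σ)) 0) ^ p = σ ^ p := by
      rw [hM]; rw [show Q a₀ - (Q a₀ - σ) = σ by ring, max_eq_left hσ.le]
    calc σ ^ p = (max (Q a₀ - (M - σ)) 0) ^ p := h1.symm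
      _ ≤ g (M - σ) := Finset.single_le_sum (f := fun a => (max (Q a - (M - σ)) 0) ^ p)
          (fun a _ => Real.rpow_nonneg (le_max_right _ _) p) (Finset.mem_univ a₀)
  have hσppos : 0 < σ ^ p := Real.rpow_pos_of_pos hσ p
  refine ⟨hgcont, hanti, ?_, hσp, ?_⟩
  · have := (hgcont.tendsto M).mono_left (nhdsWithin_le_nhds (s := Set.Iio M))
    rwa [hgM] at this
  · have hle : M - σ ≤ M := by linarith
    obtain ⟨x, hx, hgx⟩ := intermediate_value_Icc' hle hgcont.continuousOn
      ⟨hgM ▸ hσppos.le, hσp⟩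
    have hxM : x < M := by
      rcases lt_or_eq_of_le hx.2 with h | h
      · exact h
      · exfalso; rw [h, hgM] at hgx; linarith
    refine ⟨x, ⟨⟨hx.1, hxM⟩, hgx⟩, ?_⟩
    rintro y ⟨⟨hy1, hy2⟩, hgy⟩
    exact hanti.injOn hy2 hxM (hgy.trans hgx.symm)
end
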